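/- For every pair of distinct users i ≠ j and every independent set S of the interference graph G_{K,T}, the number of vertices of S in row j plus the number of vertices of S in row i is at most T + |l'_{ij}|, where row k denotes the set of vertices {(k,t) : 1 ≤ t ≤ T}. -/

import Mathlib

/-- The time-indexed interference graph `G_{K,T}` of the `K`-user LOS interference
channel with normalized cross-delays `l i j` (representing `l'_{ij}` for `i ≠ j`).
Time slots `1 ≤ t ≤ T` are represented by `Fin T`; for `i ≠ j`, the vertex `(j, t)`
is adjacent to `(i, t + l'_{ij})` whenever the latter time slot is in range. -/
def interferenceGraph (K T : ℕ) (l : Fin K → Fin K → ℤ) :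
    SimpleGraph (Fin K × Fin T) where
  Adj a b := a.1 ≠ b.1 ∧
    (((b.2 : ℕ) : ℤ) = ((a.2 : ℕ) : ℤ) + l b.1 a.1 ∨
     ((a.2 : ℕ) : ℤ) = ((b.2 : ℕ) : ℤ) + l a.1 b.1)
  symm := by
    constructor
    rintro a b ⟨h1, h2⟩
    exact ⟨h1.symm, h2.symm⟩
  loopless := by
    constructor
    rintro a ⟨h, -⟩
    exact h rfl

/-- For every pair of distinct users `i ≠ j` and every independent set `S` of the
interference graph `G_{K,T}`, the number of vertices of `S` in row `j` plus the number
of vertices of `S` in row `i` is at most `T + |l'_{ij}|`. -/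
theorem row_pair_bound (K T : ℕ) (hK : 2 ≤ K) (hT : 1 ≤ T)
    (l : Fin K → Fin K → ℤ) (i j : Fin K) (hij : i ≠ j)
    (S : Finset (Fin K × Fin T))
    (hS : ∀ u ∈ S, ∀ v ∈ S, ¬ (interferenceGraph K T l).Adj u v) :
    (S.filter (fun v => v.1 = j)).card + (S.filter (fun v => v.1 = i)).card
      ≤ T + (l i j).natAbs := by
  classical
  set L := l i j with hL
  set A : Finset ℤ := (S.filter (fun v => v.1 = j)).image
      (fun v => ((v.2 : ℕ) : ℤ) + L) with hA
  set B : Finset ℤ := (S.filter (fun v => v.1 = i)).image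
      (fun v => ((v.2 : ℕ) : ℤ)) with hB
  have hAcard : A.card = (S.filter (fun v => v.1 = j)).card := by
    apply Finset.card_image_of_injOn
    intro u hu v hv h
    simp only [Finset.mem_coe, Finset.mem_filter] at hu hv
    have h' : ((u.2 : ℕ) : ℤ) + L = ((v.2 : ℕ) : ℤ) + L := h
    have h2 : u.2 = v.2 := by
      have : ((u.2 : ℕ) : ℤ) = ((v.2 : ℕ) : ℤ) := by linarith
      exact Fin.ext (by exact_mod_cast this)
    exact Prod.ext (hu.2.trans hv.2.symm) h2
  have hBcard : B.card = (S.filter (fun v => v.1 = i)).card := by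
    apply Finset.card_image_of_injOn
    intro u hu v hv h
    simp only [Finset.mem_coe, Finset.mem_filter] at hu hv
    have h' : ((u.2 : ℕ) : ℤ) = ((v.2 : ℕ) : ℤ) := h
    have h2 : u.2 = v.2 := Fin.ext (by exact_mod_cast h')
    exact Prod.ext (hu.2.trans hv.2.symm) h2
  have hdisj : Disjoint A B := by
    rw [Finset.disjoint_left]
    intro x hxA hxB
    simp only [hA, hB, Finset.mem_image, Finset.mem_filter] at hxA hxB
    obtain ⟨u, ⟨huS, huj⟩, hux⟩ := hxA
    obtain ⟨v, ⟨hvS, hvi⟩, hvx⟩ := hxB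
    apply hS u huS v hvS
    refine ⟨by rw [huj, hvi]; exact hij.symm, Or.inl ?_⟩
    rw [hvi, huj]
    rw [hL] at hux
    linarith
  have hsub : A ∪ B ⊆ Finset.Icc (min 0 L) ((T : ℤ) - 1 + max 0 L) := by
    intro x hx
    rcases Finset.mem_union.mp hx with hx | hx <;>
      simp only [hA, hB, Finset.mem_image, Finset.mem_filter] at hx <;>
      obtain ⟨u, ⟨-, -⟩, hux⟩ := hx <;>
      have := u.2.isLt <;>
      rw [Finset.mem_Icc] <;>
      omega
  have h1 : A.card + B.card = (A ∪ B).card := (Finset.card_union_of_disjoint hdisj).symm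
  have h2 := Finset.card_le_card hsub
  rw [Int.card_Icc] at h2
  omega
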